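/- arXiv:1901.01534 — 7 statements merged into one kernel-verified Lean document; each statement's English description precedes it below -/
import Mathlib

section
/- Let ℓ, r, m, t ∈ ℕ with n = ℓ + m + r, let f : 𝔽₂^{ℓ+r+1} → 𝔽₂ be a local rule and F : 𝔽₂^n → 𝔽₂^m the cellular automaton it generates with memory ℓ and anticipation r. If F is (t, n)-asynchrony immune, t ≥ ℓ + r, and n ≥ 2ℓ + 2r + 1, then f is center permutive. -/
/-- The cellular automaton of length `ℓ + m + r` with `m` output cells generated by
local rule `f` with memory `ℓ` and anticipation `r`:
`F(x)_i = f(x_i, x_{i+1}, …, x_{i+ℓ+r})`. -/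
def localCA (ℓ m r : ℕ) (f : (Fin (ℓ + r + 1) → ZMod 2) → ZMod 2)
    (x : Fin (ℓ + m + r) → ZMod 2) : Fin m → ZMod 2 :=
  fun i => f (fun j => x ⟨i.val + j.val, by omega⟩)

/-- The asynchronous CA where the cells in `I` are not updated. -/
def asyncCA (ℓ m r : ℕ) (f : (Fin (ℓ + r + 1) → ZMod 2) → ZMod 2)
    (I : Finset (Fin m)) (x : Fin (ℓ + m + r) → ZMod 2) : Fin m → ZMod 2 :=
  fun i =>
    if i ∈ I then x ⟨i.val + ℓ, by omega⟩
    else f (fun j => x ⟨i.val + j.val, by omega⟩)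

/-- A map `G : 𝔽₂ⁿ → 𝔽₂ᵐ` is balanced if every output has exactly `2^(ℓ+r)` preimages. -/
def BalancedCA (ℓ r : ℕ) {n m : ℕ} (G : (Fin n → ZMod 2) → Fin m → ZMod 2) : Prop :=
  ∀ y : Fin m → ZMod 2,
    (Finset.univ.filter (fun x : Fin n → ZMod 2 => G x = y)).card = 2 ^ (ℓ + r)

/-- `f` generates a `(t, n)`-asynchrony immune CA (with `n = ℓ + m + r` cells and `m` output
cells): the synchronous CA is balanced and for every set `I` of at most `t` blocked cells
the asynchronous CA is balanced. -/
def AsynchronyImmune (ℓ m r t : ℕ) (f : (Fin (ℓ + r + 1) → ZMod 2) → ZMod 2) : Prop :=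
  BalancedCA ℓ r (localCA ℓ m r f) ∧
  ∀ I : Finset (Fin m), I.card ≤ t → BalancedCA ℓ r (asyncCA ℓ m r f I)

/-- A local rule is center permutive if for all `u ∈ 𝔽₂^ℓ`, `v ∈ 𝔽₂^r`, `y ∈ 𝔽₂` there is a
unique `b ∈ 𝔽₂` with `f(u, b, v) = y`. -/
def CenterPermutive (ℓ r : ℕ) (f : (Fin (ℓ + r + 1) → ZMod 2) → ZMod 2) : Prop :=
  ∀ (u : Fin ℓ → ZMod 2) (v : Fin r → ZMod 2) (y : ZMod 2),
    ∃! b : ZMod 2,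
      f (fun i =>
        if h : i.val < ℓ then u ⟨i.val, h⟩
        else if h' : i.val = ℓ then b
        else v ⟨i.val - ℓ - 1, by omega⟩) = y

private lemma zmod2_em : ∀ a : ZMod 2, a = 0 ∨ a = 1 := by decide

private lemma zmod2_eq_of_ne : ∀ a b c : ZMod 2, a ≠ c → b ≠ c → a = b := by decide

private lemma fin_eq {n : ℕ} {a b : Fin n} (h : a.val = b.val) : a = b := Fin.ext h

private lemma card_fixed {n : ℕ} (T : Finset (Fin n)) (w : Fin n → ZMod 2) :
    (Finset.univ.filter (fun x : Fin n → ZMod 2 => ∀ i ∈ T, x i = w i)).card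
      = 2 ^ (n - T.card) := by
  have e : {x : Fin n → ZMod 2 // ∀ i ∈ T, x i = w i} ≃ ((Tᶜ : Finset (Fin n)) → ZMod 2) :=
    { toFun := fun x i => x.1 i.1
      invFun := fun g => ⟨fun i => if h : i ∈ T then w i else g ⟨i, by simpa using h⟩,
        fun i hi => by simp [hi]⟩
      left_inv := fun x => by
        ext i
        by_cases h : i ∈ T
        · simp [h, x.2 i h]
        · simp [h]
      right_inv := fun g => by
        ext i
        have hi : (i : Fin n) ∉ T := Finset.mem_compl.mp i.2
        simp [hi] }
  have h1 : (Finset.univ.filter (fun x : Fin n → ZMod 2 => ∀ i ∈ T, x i = w i)).card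
      = Fintype.card {x : Fin n → ZMod 2 // ∀ i ∈ T, x i = w i} := by
    rw [Fintype.card_subtype]
  rw [h1, Fintype.card_congr e, Fintype.card_fun]
  simp [Finset.card_compl]

/-- The embedding of `(u, b, v)` as a neighbourhood configuration. -/
private def emb (ℓ r : ℕ) (u : Fin ℓ → ZMod 2) (v : Fin r → ZMod 2) (b : ZMod 2) :
    Fin (ℓ + r + 1) → ZMod 2 := fun i =>
  if h : i.val < ℓ then u ⟨i.val, h⟩
  else if h' : i.val = ℓ then b
  else v ⟨i.val - ℓ - 1, by omega⟩

private def wSd (ℓ r m : ℕ) (u : Fin ℓ → ZMod 2) (v : Fin r → ZMod 2) :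
    Fin (ℓ + m + r) → ZMod 2 := fun i =>
  if h : i.val - ℓ < ℓ then u ⟨i.val - ℓ, h⟩
  else if h' : i.val - (2*ℓ+1) < r then v ⟨i.val - (2*ℓ+1), h'⟩ else 0

private lemma wSd_u (ℓ r m : ℕ) (u : Fin ℓ → ZMod 2) (v : Fin r → ZMod 2)
    (i : Fin (ℓ+m+r)) (h : i.val - ℓ < ℓ) :
    wSd ℓ r m u v i = u ⟨i.val - ℓ, h⟩ := dif_pos h

private lemma wSd_v (ℓ r m : ℕ) (u : Fin ℓ → ZMod 2) (v : Fin r → ZMod 2)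
    (i : Fin (ℓ+m+r)) (h1 : ¬ i.val - ℓ < ℓ) (h2 : i.val - (2*ℓ+1) < r) :
    wSd ℓ r m u v i = v ⟨i.val - (2*ℓ+1), h2⟩ := by
  unfold wSd
  rw [dif_neg h1, dif_pos h2]

private def wYd (ℓ r m : ℕ) (u : Fin ℓ → ZMod 2) (v : Fin r → ZMod 2) (c : ZMod 2) :
    Fin m → ZMod 2 := fun i =>
  if h : i.val < ℓ then u ⟨i.val, h⟩
  else if i.val = ℓ then c
  else if h' : i.val - (ℓ+1) < r then v ⟨i.val - (ℓ+1), h'⟩ else 0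

private lemma wYd_u (ℓ r m : ℕ) (u : Fin ℓ → ZMod 2) (v : Fin r → ZMod 2) (c : ZMod 2)
    (i : Fin m) (h : i.val < ℓ) : wYd ℓ r m u v c i = u ⟨i.val, h⟩ := dif_pos h

private lemma wYd_c (ℓ r m : ℕ) (u : Fin ℓ → ZMod 2) (v : Fin r → ZMod 2) (c : ZMod 2)
    (i : Fin m) (h1 : ¬ i.val < ℓ) (h2 : i.val = ℓ) : wYd ℓ r m u v c i = c := by
  unfold wYd
  rw [dif_neg h1, if_pos h2]

private lemma wYd_v (ℓ r m : ℕ) (u : Fin ℓ → ZMod 2) (v : Fin r → ZMod 2) (c : ZMod 2)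
    (i : Fin m) (h1 : ¬ i.val < ℓ) (h2 : ¬ i.val = ℓ) (h3 : i.val - (ℓ+1) < r) :
    wYd ℓ r m u v c i = v ⟨i.val - (ℓ+1), h3⟩ := by
  unfold wYd
  rw [dif_neg h1, if_neg h2, dif_pos h3]

private lemma center_ne (ℓ r m t : ℕ) (f : (Fin (ℓ + r + 1) → ZMod 2) → ZMod 2)
    (hAI : AsynchronyImmune ℓ m r t f)
    (ht : ℓ + r ≤ t) (hn : 2 * ℓ + 2 * r + 1 ≤ ℓ + m + r)
    (u : Fin ℓ → ZMod 2) (v : Fin r → ZMod 2) :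
    f (emb ℓ r u v 0) ≠ f (emb ℓ r u v 1) := by
  intro heq
  have hm : ℓ + r + 1 ≤ m := by omega
  set c := f (emb ℓ r u v 0) with hc
  have hfc : ∀ b : ZMod 2, f (emb ℓ r u v b) = c := by
    intro b
    rcases zmod2_em b with h | h <;> subst h
    · rfl
    · exact heq.symm
  -- blocked cells: all cells in [0, ℓ+r] except cell ℓ
  have hIlt : ∀ a ∈ (Finset.range (ℓ+r+1)).erase ℓ, a < m := by
    intro a ha
    have := Finset.mem_range.mp (Finset.mem_of_mem_erase ha)
    omega
  set I : Finset (Fin m) := ((Finset.range (ℓ+r+1)).erase ℓ).attachFin hIlt with hI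
  have hImem : ∀ i : Fin m, i ∈ I ↔ i.val ≠ ℓ ∧ i.val < ℓ + r + 1 := by
    intro i
    rw [hI, Finset.mem_attachFin]
    simp [Finset.mem_erase, Finset.mem_range]
  have hIcard : I.card = ℓ + r := by
    rw [hI, Finset.card_attachFin,
      Finset.card_erase_of_mem (by simp [Finset.mem_range]), Finset.card_range]
    omega
  have hbalI : BalancedCA ℓ r (asyncCA ℓ m r f I) := hAI.2 I (le_trans (le_of_eq hIcard) ht)
  -- the source set S
  have hTSlt : ∀ a ∈ (Finset.Ico ℓ (2*ℓ+r+1)).erase (2*ℓ), a < ℓ + m + r := by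
    intro a ha
    have := Finset.mem_Ico.mp (Finset.mem_of_mem_erase ha)
    omega
  set TS : Finset (Fin (ℓ+m+r)) := ((Finset.Ico ℓ (2*ℓ+r+1)).erase (2*ℓ)).attachFin hTSlt
    with hTS
  have hTSmem : ∀ i : Fin (ℓ+m+r), i ∈ TS ↔ (i.val ≠ 2*ℓ ∧ ℓ ≤ i.val ∧ i.val < 2*ℓ+r+1) := by
    intro i
    rw [hTS, Finset.mem_attachFin]
    simp [Finset.mem_erase, Finset.mem_Ico, and_assoc]
  have hTScard : TS.card = ℓ + r := by
    rw [hTS, Finset.card_attachFin,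
      Finset.card_erase_of_mem (by simp [Finset.mem_Ico]; omega), Nat.card_Ico]
    omega
  set S : Finset (Fin (ℓ+m+r) → ZMod 2) :=
    Finset.univ.filter (fun x => ∀ i ∈ TS, x i = wSd ℓ r m u v i) with hS
  have hScard : S.card = 2 ^ m := by
    rw [hS, card_fixed TS (wSd ℓ r m u v), hTScard]
    congr 1
    omega
  -- the target set Y
  have hTYlt : ∀ a ∈ Finset.range (ℓ+r+1), a < m := by
    intro a ha
    have := Finset.mem_range.mp ha
    omega
  set TY : Finset (Fin m) := (Finset.range (ℓ+r+1)).attachFin hTYlt with hTY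
  have hTYmem : ∀ i : Fin m, i ∈ TY ↔ i.val < ℓ+r+1 := by
    intro i
    rw [hTY, Finset.mem_attachFin, Finset.mem_range]
  have hTYcard : TY.card = ℓ + r + 1 := by
    rw [hTY, Finset.card_attachFin, Finset.card_range]
  set Y : Finset (Fin m → ZMod 2) :=
    Finset.univ.filter (fun y => ∀ i ∈ TY, y i = wYd ℓ r m u v c i) with hY
  have hYcard : Y.card = 2 ^ (m - (ℓ+r+1)) := by
    rw [hY, card_fixed TY (wYd ℓ r m u v c), hTYcard]
  -- extraction lemmas for membership in S
  have hS_u : ∀ x ∈ S, ∀ (k : ℕ) (hk : k < ℓ) (hna : ℓ + k < ℓ+m+r),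
      x ⟨ℓ + k, hna⟩ = u ⟨k, hk⟩ := by
    intro x hx k hk hna
    rw [hS, Finset.mem_filter] at hx
    have hmem : (⟨ℓ + k, hna⟩ : Fin (ℓ+m+r)) ∈ TS :=
      (hTSmem _).mpr ⟨show ℓ + k ≠ 2*ℓ by omega, show ℓ ≤ ℓ + k by omega,
        show ℓ + k < 2*ℓ+r+1 by omega⟩
    exact (hx.2 _ hmem).trans ((wSd_u ℓ r m u v ⟨ℓ + k, hna⟩ (show ℓ + k - ℓ < ℓ by omega)).trans
      (congrArg u (fin_eq (show ℓ + k - ℓ = k by omega))))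
  have hS_v : ∀ x ∈ S, ∀ (k : ℕ) (hk : k < r) (hna : 2*ℓ+1+k < ℓ+m+r),
      x ⟨2*ℓ+1+k, hna⟩ = v ⟨k, hk⟩ := by
    intro x hx k hk hna
    rw [hS, Finset.mem_filter] at hx
    have hmem : (⟨2*ℓ+1+k, hna⟩ : Fin (ℓ+m+r)) ∈ TS :=
      (hTSmem _).mpr ⟨show 2*ℓ+1+k ≠ 2*ℓ by omega, show ℓ ≤ 2*ℓ+1+k by omega,
        show 2*ℓ+1+k < 2*ℓ+r+1 by omega⟩
    exact (hx.2 _ hmem).trans ((wSd_v ℓ r m u v ⟨2*ℓ+1+k, hna⟩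
      (show ¬ 2*ℓ+1+k - ℓ < ℓ by omega) (show 2*ℓ+1+k - (2*ℓ+1) < r by omega)).trans
      (congrArg v (fin_eq (show 2*ℓ+1+k - (2*ℓ+1) = k by omega))))
  -- Claim 1 : S maps into Y
  have claim1 : ∀ x ∈ S, asyncCA ℓ m r f I x ∈ Y := by
    intro x hx
    rw [hY, Finset.mem_filter]
    refine ⟨Finset.mem_univ _, ?_⟩
    intro i hi
    have hilt : i.val < ℓ + r + 1 := (hTYmem i).mp hi
    simp only [asyncCA]
    by_cases h1 : i.val < ℓ
    · have hiI : i ∈ I := (hImem i).mpr ⟨show i.val ≠ ℓ by omega, by omega⟩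
      rw [if_pos hiI, wYd_u ℓ r m u v c i h1]
      exact (congrArg x (fin_eq (show i.val + ℓ = ℓ + i.val by omega))).trans
        (hS_u x hx i.val h1 (by omega))
    · by_cases h2 : i.val = ℓ
      · have hiI : i ∉ I := fun hcon => ((hImem i).mp hcon).1 h2
        rw [if_neg hiI, wYd_c ℓ r m u v c i h1 h2]
        have harg : (fun j : Fin (ℓ+r+1) => x ⟨i.val + j.val, by omega⟩)
            = emb ℓ r u v (x ⟨2*ℓ, by omega⟩) := by
          funext j
          simp only [emb]
          by_cases hj : j.val < ℓ
          · rw [dif_pos hj]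
            exact (congrArg x (fin_eq (show i.val + j.val = ℓ + j.val by omega))).trans
              (hS_u x hx j.val hj (by omega))
          · by_cases hj2 : j.val = ℓ
            · rw [dif_neg hj, dif_pos hj2]
              exact congrArg x (fin_eq (show i.val + j.val = 2*ℓ by omega))
            · rw [dif_neg hj, dif_neg hj2]
              exact (congrArg x (fin_eq
                  (show i.val + j.val = 2*ℓ+1 + (j.val - ℓ - 1) by omega))).trans
                (hS_v x hx (j.val - ℓ - 1) (by omega) (by omega))
        exact (congrArg f harg).trans (hfc _)
      · have hiI : i ∈ I := (hImem i).mpr ⟨h2, hilt⟩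
        rw [if_pos hiI, wYd_v ℓ r m u v c i h1 h2 (show i.val - (ℓ+1) < r by omega)]
        exact (congrArg x (fin_eq
            (show i.val + ℓ = 2*ℓ+1 + (i.val - ℓ - 1) by omega))).trans
          ((hS_v x hx (i.val - ℓ - 1) (by omega) (by omega)).trans
            (congrArg v (fin_eq (show i.val - ℓ - 1 = i.val - (ℓ+1) by omega))))
  -- Claim 2 : any preimage of an element of Y lies in S
  have claim2 : ∀ x : Fin (ℓ+m+r) → ZMod 2, ∀ y ∈ Y, asyncCA ℓ m r f I x = y → x ∈ S := by
    intro x y hy hxy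
    rw [hY, Finset.mem_filter] at hy
    have hblocked : ∀ (a : ℕ) (ha : a < m), (⟨a, ha⟩ : Fin m) ∈ I →
        x ⟨a + ℓ, by omega⟩ = y ⟨a, ha⟩ := by
      intro a ha haI
      have h2 := congrFun hxy ⟨a, ha⟩
      simp only [asyncCA] at h2
      rw [if_pos haI] at h2
      exact h2
    rw [hS, Finset.mem_filter]
    refine ⟨Finset.mem_univ _, ?_⟩
    intro i hi
    obtain ⟨hne2, hge, hlt⟩ := (hTSmem i).mp hi
    by_cases hlt2 : i.val < 2*ℓ
    · have haI : (⟨i.val - ℓ, show i.val - ℓ < m by omega⟩ : Fin m) ∈ I :=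
        (hImem _).mpr ⟨show i.val - ℓ ≠ ℓ by omega, show i.val - ℓ < ℓ+r+1 by omega⟩
      have hb := hblocked (i.val - ℓ) (show i.val - ℓ < m by omega) haI
      have hyv := hy.2 (⟨i.val - ℓ, show i.val - ℓ < m by omega⟩ : Fin m)
        ((hTYmem _).mpr (show i.val - ℓ < ℓ+r+1 by omega))
      rw [wSd_u ℓ r m u v i (show i.val - ℓ < ℓ by omega)]
      exact (congrArg x (fin_eq (show i.val = i.val - ℓ + ℓ by omega))).trans
        (hb.trans (hyv.trans (wYd_u ℓ r m u v c _ (show i.val - ℓ < ℓ by omega))))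
    · have haI : (⟨i.val - ℓ, show i.val - ℓ < m by omega⟩ : Fin m) ∈ I :=
        (hImem _).mpr ⟨show i.val - ℓ ≠ ℓ by omega, show i.val - ℓ < ℓ+r+1 by omega⟩
      have hb := hblocked (i.val - ℓ) (show i.val - ℓ < m by omega) haI
      have hyv := hy.2 (⟨i.val - ℓ, show i.val - ℓ < m by omega⟩ : Fin m)
        ((hTYmem _).mpr (show i.val - ℓ < ℓ+r+1 by omega))
      rw [wSd_v ℓ r m u v i (show ¬ i.val - ℓ < ℓ by omega)
        (show i.val - (2*ℓ+1) < r by omega)]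
      exact (congrArg x (fin_eq (show i.val = i.val - ℓ + ℓ by omega))).trans
        (hb.trans (hyv.trans ((wYd_v ℓ r m u v c _ (show ¬ i.val - ℓ < ℓ by omega)
          (show ¬ i.val - ℓ = ℓ by omega) (show i.val - ℓ - (ℓ+1) < r by omega)).trans
          (congrArg v (fin_eq (show i.val - ℓ - (ℓ+1) = i.val - (2*ℓ+1) by omega))))))
  -- the counting argument
  have hfiber : ∀ y ∈ Y, S.filter (fun x => asyncCA ℓ m r f I x = y) =
      Finset.univ.filter (fun x => asyncCA ℓ m r f I x = y) := by
    intro y hy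
    apply Finset.ext
    intro x
    simp only [Finset.mem_filter, Finset.mem_univ, true_and]
    constructor
    · rintro ⟨-, h⟩
      exact h
    · intro h
      exact ⟨claim2 x y hy h, h⟩
  have hcount : S.card = Y.card * 2 ^ (ℓ + r) := by
    calc S.card = ∑ y ∈ Y, (S.filter (fun x => asyncCA ℓ m r f I x = y)).card :=
          Finset.card_eq_sum_card_fiberwise claim1
      _ = ∑ _y ∈ Y, 2 ^ (ℓ + r) :=
          Finset.sum_congr rfl (fun y hy => by rw [hfiber y hy]; exact hbalI y)
      _ = Y.card * 2 ^ (ℓ + r) := by rw [Finset.sum_const, smul_eq_mul]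
  rw [hScard, hYcard, ← pow_add] at hcount
  have := Nat.pow_right_injective (le_refl 2) hcount
  omega

/-- Theorem 1: if `F` is `(t,n)`-AI, `t ≥ ℓ + r` and
`n = ℓ + m + r ≥ 2ℓ + 2r + 1`, then the local rule `f` is center permutive. -/
theorem ai_implies_centerPermutive (ℓ r m t : ℕ)
    (f : (Fin (ℓ + r + 1) → ZMod 2) → ZMod 2)
    (hAI : AsynchronyImmune ℓ m r t f)
    (ht : ℓ + r ≤ t) (hn : 2 * ℓ + 2 * r + 1 ≤ ℓ + m + r) :
    CenterPermutive ℓ r f := by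
  intro u v y
  have hne := center_ne ℓ r m t f hAI ht hn u v
  show ∃! b : ZMod 2, f (emb ℓ r u v b) = y
  by_cases h0 : f (emb ℓ r u v 0) = y
  · refine ⟨0, h0, ?_⟩
    intro b hb
    rcases zmod2_em b with rfl | rfl
    · rfl
    · exact absurd (h0.trans hb.symm) hne
  · have h1 : f (emb ℓ r u v 1) = y := by
      by_contra h1
      exact hne (zmod2_eq_of_ne _ _ _ h0 h1)
    refine ⟨1, h1, ?_⟩
    intro b hb
    rcases zmod2_em b with rfl | rfl
    · exact absurd hb h0
    · rfl
end

section
/- Let ℓ, r, m, t, k ∈ ℕ with n = ℓ + m + r, let f : 𝔽₂^{ℓ+r+1} → 𝔽₂ be a local rule and F : 𝔽₂^n → 𝔽₂^m the CA it generates with memory ℓ and anticipation r. Suppose F is (t, n)-asynchrony immune, t ≥ ℓ + r, and n ≥ 2ℓ + 2r + k. Let F′ : 𝔽₂^{ℓ+k+r} → 𝔽₂^k be the CA with the same local rule f (with m replaced by k). Then for every u ∈ 𝔽₂^ℓ and v ∈ 𝔽₂^r, the map F_{u,v} : 𝔽₂^k → 𝔽₂^k defined by F_{u,v}(x) = F′(u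 x v) (where u x v denotes the concatenation of u, x, v) is a bijection. -/
/-- Concatenation `u x v` of vectors `u ∈ 𝔽₂^ℓ`, `x ∈ 𝔽₂^k`, `v ∈ 𝔽₂^r`. -/
def concat3 (ℓ k r : ℕ) (u : Fin ℓ → ZMod 2) (x : Fin k → ZMod 2) (v : Fin r → ZMod 2) :
    Fin (ℓ + k + r) → ZMod 2 :=
  fun i =>
    if h1 : i.val < ℓ then u ⟨i.val, h1⟩
    else if h2 : i.val < ℓ + k then x ⟨i.val - ℓ, by omega⟩
    else v ⟨i.val - ℓ - k, by omega⟩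
private lemma xcongr {n : ℕ} (x : Fin n → ZMod 2) {a b : Fin n} (h : a.val = b.val) :
    x a = x b := by
  congr 1
  exact Fin.ext h

/-- Theorem 2: if `F` is `(t,n)`-AI with `t ≥ ℓ + r` and
`n = ℓ + m + r ≥ 2ℓ + 2r + k`, then for each `u ∈ 𝔽₂^ℓ`, `v ∈ 𝔽₂^r` the map
`x ↦ F'(u x v)`, where `F' : 𝔽₂^{ℓ+k+r} → 𝔽₂^k` is the CA with the same local rule,
is a bijection of `𝔽₂^k`. -/
theorem ai_implies_bijection (ℓ r m t k : ℕ)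
    (f : (Fin (ℓ + r + 1) → ZMod 2) → ZMod 2)
    (hAI : AsynchronyImmune ℓ m r t f)
    (ht : ℓ + r ≤ t) (hn : 2 * ℓ + 2 * r + k ≤ ℓ + m + r)
    (u : Fin ℓ → ZMod 2) (v : Fin r → ZMod 2) :
    Function.Bijective
      (fun x : Fin k → ZMod 2 => localCA ℓ k r f (concat3 ℓ k r u x v)) := by
  rw [← Finite.surjective_iff_bijective]
  intro w
  have hm : ℓ + r + k ≤ m := by omega
  set I : Finset (Fin m) :=
    Finset.univ.filter (fun i => i.val < ℓ ∨ (ℓ + k ≤ i.val ∧ i.val < ℓ + k + r)) with hI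
  have hImem : ∀ i : Fin m, i ∈ I ↔ (i.val < ℓ ∨ (ℓ + k ≤ i.val ∧ i.val < ℓ + k + r)) := by
    intro i
    simp [hI]
  have hIcard : I.card ≤ t := by
    have h1 : I.card ≤ (Finset.range (ℓ + r)).card := by
      apply Finset.card_le_card_of_injOn
        (fun i => if i.val < ℓ then i.val else ℓ + (i.val - ℓ - k))
      · intro i hi
        rw [Finset.mem_coe, hImem] at hi
        simp only [Finset.mem_coe, Finset.mem_range]
        rcases hi with h | h
        · rw [if_pos h]; omega
        · rw [if_neg (by omega)]; omega
      · intro a ha b hb hab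
        rw [Finset.mem_coe, hImem] at ha hb
        apply Fin.ext
        by_cases h1 : a.val < ℓ <;> by_cases h2 : b.val < ℓ <;>
          simp only [h1, h2, if_true, if_false] at hab <;> omega
    rw [Finset.card_range] at h1
    omega
  set y : Fin m → ZMod 2 := fun i =>
    if h1 : i.val < ℓ then u ⟨i.val, h1⟩
    else if h2 : i.val < ℓ + k then w ⟨i.val - ℓ, by omega⟩
    else if h3 : i.val < ℓ + k + r then v ⟨i.val - ℓ - k, by omega⟩
    else 0 with hy
  have hbal := hAI.2 I hIcard y
  have hpos : 0 < (Finset.univ.filter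
      (fun x : Fin (ℓ + m + r) → ZMod 2 => asyncCA ℓ m r f I x = y)).card := by
    rw [hbal]
    exact pow_pos (by norm_num) _
  obtain ⟨x, hx⟩ := Finset.card_pos.mp hpos
  rw [Finset.mem_filter] at hx
  have hxy : ∀ i : Fin m, asyncCA ℓ m r f I x i = y i := fun i => congrFun hx.2 i
  -- value of y at an index
  have hyu : ∀ (i : Fin m) (h : i.val < ℓ), y i = u ⟨i.val, h⟩ := by
    intro i h
    rw [hy]
    exact dif_pos h
  have hyw : ∀ (i : Fin m) (h1 : ¬ i.val < ℓ) (h2 : i.val < ℓ + k),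
      y i = w ⟨i.val - ℓ, by omega⟩ := by
    intro i h1 h2
    rw [hy]
    simp only [dif_neg h1, dif_pos h2]
  have hyv : ∀ (i : Fin m) (h1 : ¬ i.val < ℓ) (h2 : ¬ i.val < ℓ + k) (h3 : i.val < ℓ + k + r),
      y i = v ⟨i.val - ℓ - k, by omega⟩ := by
    intro i h1 h2 h3
    rw [hy]
    simp only [dif_neg h1, dif_neg h2, dif_pos h3]
  clear hy hx hbal hpos
  refine ⟨fun j => x ⟨2*ℓ + j.val, by omega⟩, ?_⟩
  have hcell : ∀ p : Fin (ℓ + k + r),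
      concat3 ℓ k r u (fun j : Fin k => x ⟨2*ℓ + j.val, by omega⟩) v p
        = x ⟨ℓ + p.val, by omega⟩ := by
    intro p
    unfold concat3
    by_cases h1 : p.val < ℓ
    · rw [dif_pos h1]
      have hmem : (⟨p.val, by omega⟩ : Fin m) ∈ I := by
        rw [hImem]; left; exact h1
      have hb := hxy ⟨p.val, by omega⟩
      unfold asyncCA at hb
      rw [if_pos hmem, hyu _ h1] at hb
      rw [← hb]
      exact xcongr x (show p.val + ℓ = ℓ + p.val by omega)
    · rw [dif_neg h1]
      by_cases h2 : p.val < ℓ + k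
      · rw [dif_pos h2]
        exact xcongr x (by show 2*ℓ + (p.val - ℓ) = ℓ + p.val; omega)
      · rw [dif_neg h2]
        have hmem : (⟨p.val, by omega⟩ : Fin m) ∈ I := by
          rw [hImem]; right; exact ⟨show ℓ + k ≤ p.val by omega, show p.val < ℓ + k + r by omega⟩
        have hb := hxy ⟨p.val, by omega⟩
        unfold asyncCA at hb
        rw [if_pos hmem, hyv _ h1 h2 (by show p.val < ℓ + k + r; omega)] at hb
        rw [← hb]
        exact xcongr x (show p.val + ℓ = ℓ + p.val by omega)
  funext j
  have hnotmem : (⟨ℓ + j.val, by omega⟩ : Fin m) ∉ I := by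
    rw [hImem]
    push_neg
    exact ⟨show ℓ ≤ ℓ + j.val by omega, fun h => absurd (show ℓ + k ≤ ℓ + j.val from h) (by omega)⟩
  have hb := hxy ⟨ℓ + j.val, by omega⟩
  unfold asyncCA at hb
  rw [if_neg hnotmem,
    hyw _ (by show ¬ ℓ + j.val < ℓ; omega) (by show ℓ + j.val < ℓ + k; omega)] at hb
  show localCA ℓ k r f (concat3 ℓ k r u (fun j : Fin k => x ⟨2*ℓ + j.val, by omega⟩) v) j = w j
  unfold localCA
  have heq : (fun q : Fin (ℓ + r + 1) =>
      concat3 ℓ k r u (fun j : Fin k => x ⟨2*ℓ + j.val, by omega⟩) v ⟨j.val + q.val, by omega⟩)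
      = fun q : Fin (ℓ + r + 1) => x ⟨ℓ + j.val + q.val, by omega⟩ := by
    funext q
    rw [hcell ⟨j.val + q.val, by omega⟩]
    exact xcongr x (by show ℓ + (j.val + q.val) = ℓ + j.val + q.val; omega)
  rw [heq, hb]
  congr 1
  exact Fin.ext (by show ℓ + j.val - ℓ = j.val; omega)
end

section
/- Let ℓ, m, t ∈ ℕ with r = ℓ and n = 2ℓ + m, let f : 𝔽₂^{2ℓ+1} → 𝔽₂ be a local rule and F : 𝔽₂^n → 𝔽₂^m the CA it generates with memory ℓ and anticipation r = ℓ. If F is (t, n)-asynchrony immune, then the reverse CA F^R : 𝔽₂^n → 𝔽₂^m, i.e. the CA with memory ℓ and anticipation ℓ generated by the reversed local rule f^R(x₀, …, x_{2ℓ}) = f(x_{2ℓ}, …, x₀), is also (t, n)-asynchrony immune. -/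
/-- Proposition 1: with `r = ℓ`, if the CA generated by `f` is `(t,n)`-AI,
then the CA generated by the reversed rule `f^R(x₀,…,x_{2ℓ}) = f(x_{2ℓ},…,x₀)` is also
`(t,n)`-AI. -/
theorem ai_reverse (ℓ m t : ℕ)
    (f : (Fin (ℓ + ℓ + 1) → ZMod 2) → ZMod 2)
    (hAI : AsynchronyImmune ℓ m ℓ t f) :
    AsynchronyImmune ℓ m ℓ t (fun x => f (fun j => x j.rev)) := by
  obtain ⟨hbal, hasync⟩ := hAI
  -- the local CA is the async CA with empty blocked set
  have hloc : ∀ (g : (Fin (ℓ + ℓ + 1) → ZMod 2) → ZMod 2),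
      localCA ℓ m ℓ g = asyncCA ℓ m ℓ g ∅ := by
    intro g; funext x i; simp [localCA, asyncCA]
  -- key conjugation identity
  have key : ∀ (I : Finset (Fin m)) (x : Fin (ℓ + m + ℓ) → ZMod 2) (i : Fin m),
      asyncCA ℓ m ℓ (fun z => f (fun j => z j.rev)) I x i
        = asyncCA ℓ m ℓ f (I.image Fin.rev) (fun j => x j.rev) i.rev := by
    intro I x i
    unfold asyncCA
    have hmem : i.rev ∈ I.image Fin.rev ↔ i ∈ I := by
      constructor
      · intro h
        obtain ⟨a, ha, hae⟩ := Finset.mem_image.mp h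
        have : a = i := Fin.rev_injective hae
        rwa [← this]
      · intro h; exact Finset.mem_image_of_mem _ h
    by_cases h : i ∈ I
    · rw [if_pos h, if_pos (hmem.mpr h)]
      congr 1
      ext
      simp only [Fin.val_rev]
      omega
    · rw [if_neg h, if_neg (fun hc => h (hmem.mp hc))]
      show f _ = f _
      congr 1
      funext j
      beta_reduce
      congr 1
      ext
      simp only [Fin.val_rev]
      have hj := j.isLt
      have hi := i.isLt
      omega
  have hmain : ∀ I : Finset (Fin m), I.card ≤ t →
      BalancedCA ℓ ℓ (asyncCA ℓ m ℓ (fun z => f (fun j => z j.rev)) I) := by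
    intro I hI y
    have hcard : (I.image Fin.rev).card ≤ t := le_trans Finset.card_image_le hI
    have hb := hasync (I.image Fin.rev) hcard (fun k => y k.rev)
    rw [← hb]
    apply Finset.card_bij' (fun x _ => (fun j : Fin (ℓ + m + ℓ) => x j.rev))
      (fun x _ => (fun j : Fin (ℓ + m + ℓ) => x j.rev))
    · intro x hx
      simp only [Finset.mem_filter, Finset.mem_univ, true_and] at hx ⊢
      funext k
      have hk := key I x k.rev
      rw [Fin.rev_rev] at hk
      rw [← hk, hx]
    · intro x hx
      simp only [Finset.mem_filter, Finset.mem_univ, true_and] at hx ⊢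
      funext i
      rw [key I _ i]
      have : (fun j : Fin (ℓ + m + ℓ) => x j.rev.rev) = x := by
        funext j; rw [Fin.rev_rev]
      rw [this, hx]
      simp [Fin.rev_rev]
    · intro x _; funext j; simp [Fin.rev_rev]
    · intro x _; funext j; simp [Fin.rev_rev]
  constructor
  · rw [hloc]
    exact hmain ∅ (by simp)
  · exact hmain
end

section
/- Let ℓ, r, m, t ∈ ℕ with n = ℓ + m + r, let f : 𝔽₂^{ℓ+r+1} → 𝔽₂ be a local rule and F : 𝔽₂^n → 𝔽₂^m the CA it generates with memory ℓ and anticipation r. If F is (t, n)-asynchrony immune, then the complement CA F^C : 𝔽₂^n → 𝔽₂^m, i.e. the CA with memory ℓ and anticipation r generated by the complemented local rule f^C = 1 ⊕ f, is also (t, n)-asynchrony immune. -/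
/-- Proposition 2: if the CA generated by `f` is `(t,n)`-AI, then the CA
generated by the complemented rule `f^C = 1 ⊕ f` is also `(t,n)`-AI. -/
theorem ai_complement (ℓ r m t : ℕ)
    (f : (Fin (ℓ + r + 1) → ZMod 2) → ZMod 2)
    (hAI : AsynchronyImmune ℓ m r t f) :
    AsynchronyImmune ℓ m r t (fun x => 1 + f x) := by
  have key : ∀ a b : ZMod 2, (1 + a = b ↔ a = b + 1) := by decide
  obtain ⟨h1, h2⟩ := hAI
  constructor
  · intro y
    rw [← h1 (fun i => y i + 1)]
    congr 1
    apply Finset.filter_congr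
    intro x _
    simp [localCA, funext_iff, key]
  · intro I hI y
    rw [← h2 I hI (fun i => if i ∈ I then y i else y i + 1)]
    congr 1
    apply Finset.filter_congr
    intro x _
    simp only [asyncCA, funext_iff, localCA]
    apply forall_congr'
    intro i
    by_cases hi : i ∈ I <;> simp [hi, key]
end

section
/- Let ℓ, r, m ∈ ℕ with n = ℓ + m + r, let f : 𝔽₂^{ℓ+r+1} → 𝔽₂ be a local rule, F the CA it generates, and F^C the CA generated by the complemented rule f^C = 1 ⊕ f (same memory and anticipation). Then for every I ⊆ {0, …, m−1}, the asynchronous CA F̃_I is balanced if and only if the asynchronous CA (F^C)̃_I is balanced. -/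
/-- for every set `I` of blocked cells, the asynchronous CA of `f` is
balanced iff the asynchronous CA of the complemented rule `f^C = 1 ⊕ f` is balanced. -/
theorem asyncCA_complement_balanced_iff (ℓ r m : ℕ)
    (f : (Fin (ℓ + r + 1) → ZMod 2) → ZMod 2) (I : Finset (Fin m)) :
    BalancedCA ℓ r (asyncCA ℓ m r f I) ↔
      BalancedCA ℓ r (asyncCA ℓ m r (fun x => 1 + f x) I) := by
  have z2 : ∀ a : ZMod 2, 1 + a + 1 = a := by decide
  have z2' : ∀ a : ZMod 2, 1 + (1 + a) = a := by decide
  have z2'' : ∀ a : ZMod 2, 1 + (a + 1) = a := by decide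
  have key : ∀ (g : (Fin (ℓ + r + 1) → ZMod 2) → ZMod 2) (x : Fin (ℓ + m + r) → ZMod 2) (y : Fin m → ZMod 2),
      asyncCA ℓ m r (fun x => 1 + g x) I x = y ↔
      asyncCA ℓ m r g I x = (fun i => y i + (if i ∈ I then 0 else 1)) := by
    intro g x y
    constructor <;> intro h <;> funext i <;>
      have hi := congrFun h i <;>
      simp only [asyncCA] at hi ⊢ <;>
      split_ifs at hi ⊢ with hI
    · simp_all
    · rw [← hi, z2]
    · simp_all
    · rw [hi, z2'']
  have equiv : ∀ (g : (Fin (ℓ + r + 1) → ZMod 2) → ZMod 2),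
      BalancedCA ℓ r (asyncCA ℓ m r g I) → BalancedCA ℓ r (asyncCA ℓ m r (fun x => 1 + g x) I) := by
    intro g hg y
    rw [show (Finset.univ.filter (fun x : Fin (ℓ + m + r) → ZMod 2 =>
        asyncCA ℓ m r (fun x => 1 + g x) I x = y)) =
        (Finset.univ.filter (fun x => asyncCA ℓ m r g I x =
          (fun i => y i + (if i ∈ I then 0 else 1)))) from by
      apply Finset.filter_congr; intro x _; simpa using key g x y]
    exact hg _
  constructor
  · exact equiv f
  · intro h
    have := equiv (fun x => 1 + f x) h
    have heq : (fun x => 1 + (1 + f x)) = f := by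
      funext x; rw [z2']
    rwa [heq] at this
end

section
/- Let ℓ = r = 1, m = 8, n = 10, and let f : 𝔽₂³ → 𝔽₂ be the elementary rule given by f(x₀, x₁, x₂) = x₀ ⊕ x₁ (rule 60). Then the CA F : 𝔽₂^{10} → 𝔽₂^8 generated by f with memory 1 and anticipation 1 is (2, 10)-asynchrony immune. -/
def f60 : (Fin (1 + 1 + 1) → ZMod 2) → ZMod 2 := fun x => x 0 + x 1

def build (I : Finset (Fin 8)) (y : Fin 8 → ZMod 2) (a b : ZMod 2) : ℕ → ZMod 2
  | 0 => a
  | (k+1) => if h : k < 8 then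
      y ⟨k, h⟩ + (if (⟨k, h⟩ : Fin 8) ∈ I then 0 else build I y a b k)
    else b

lemma zmod2_swap (a b c : ZMod 2) (h : a + b = c) : b = c + a := by
  revert h; revert a b c; decide

lemma zmod2_cancel (a c : ZMod 2) : a + (c + a) = c := by
  revert a c; decide

lemma build_eq (I : Finset (Fin 8)) (y : Fin 8 → ZMod 2) (x : Fin (1+8+1) → ZMod 2)
    (hx : asyncCA 1 8 1 f60 I x = y) :
    ∀ k (hk : k < 10), x ⟨k, hk⟩ = build I y (x 0) (x 9) k := by
  intro k
  induction k with
  | zero => intro hk; rfl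
  | succ k ih =>
    intro hk
    by_cases h8 : k < 8
    · have hy : asyncCA 1 8 1 f60 I x ⟨k, h8⟩ = y ⟨k, h8⟩ := by rw [hx]
      simp only [asyncCA, f60] at hy
      by_cases hm : (⟨k, h8⟩ : Fin 8) ∈ I
      · simp only [hm, if_true] at hy
        simp only [build, dif_pos h8, if_pos hm, add_zero, ← hy]
      · simp only [hm, if_false] at hy
        have hy' : x ⟨k, by omega⟩ + x ⟨k + 1, by omega⟩ = y ⟨k, h8⟩ := hy
        simp only [build, dif_pos h8, if_neg hm, ← ih (by omega)]
        exact zmod2_swap _ _ _ hy'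
    · have hk9 : k = 8 := by omega
      subst hk9
      simp only [build, dif_neg (by omega : ¬ (8 < 8))]
      rfl

lemma ca_build (I : Finset (Fin 8)) (y : Fin 8 → ZMod 2) (a b : ZMod 2) :
    asyncCA 1 8 1 f60 I (fun i => build I y a b i.val) = y := by
  funext i
  simp only [asyncCA, f60]
  by_cases hm : i ∈ I
  · simp only [hm, if_true]
    show build I y a b (i.val + 1) = y i
    simp only [build, dif_pos i.isLt, if_pos hm, add_zero]
  · simp only [hm, if_false]
    show build I y a b i.val + build I y a b (i.val + 1) = y i
    rw [show build I y a b (i.val + 1) =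
        y ⟨i.val, i.isLt⟩ + build I y a b i.val from by
      simp only [build, dif_pos i.isLt, if_neg hm]]
    exact zmod2_cancel _ _

lemma async_balanced (I : Finset (Fin 8)) : BalancedCA 1 1 (asyncCA 1 8 1 f60 I) := by
  intro y
  have hinj : Function.Injective
      (fun p : ZMod 2 × ZMod 2 => (fun i : Fin (1+8+1) => build I y p.1 p.2 i.val)) := by
    intro p q h
    have h0 : p.1 = q.1 := congrFun h (0 : Fin 10)
    have h9 : p.2 = q.2 := congrFun h (9 : Fin 10)
    exact Prod.ext h0 h9
  have hset : (Finset.univ.filter (fun x : Fin (1+8+1) → ZMod 2 => asyncCA 1 8 1 f60 I x = y))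
      = Finset.univ.image
        (fun p : ZMod 2 × ZMod 2 => (fun i : Fin (1+8+1) => build I y p.1 p.2 i.val)) := by
    ext x
    simp only [Finset.mem_filter, Finset.mem_univ, true_and, Finset.mem_image]
    constructor
    · intro hx
      refine ⟨(x 0, x 9), ?_⟩
      funext i
      exact (build_eq I y x hx i.val i.isLt).symm
    · rintro ⟨p, rfl⟩
      exact ca_build I y p.1 p.2
  rw [hset, Finset.card_image_of_injective _ hinj]
  decide

/-- elementary rule 60, `f(x₀,x₁,x₂) = x₀ ⊕ x₁`, generates a
`(2,10)`-asynchrony immune CA with `ℓ = r = 1` and `m = 8` output cells. -/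
theorem rule60_ai :
    AsynchronyImmune 1 8 1 2 (fun x : Fin (1 + 1 + 1) → ZMod 2 => x 0 + x 1) := by
  constructor
  · have h : localCA 1 8 1 f60 = asyncCA 1 8 1 f60 ∅ := by
      funext x i
      simp [localCA, asyncCA]
    exact h ▸ async_balanced ∅
  · intro I _
    exact async_balanced I
end

section
/- Let ℓ = 1, r = 2, m = 8, n = 11. There is no local rule f : 𝔽₂⁴ → 𝔽₂ generating a (3, 11)-asynchrony immune CA F : 𝔽₂^{11} → 𝔽₂^8 (with memory 1 and anticipation 2) whose nonlinearity equals 6; that is, no (3, 11)-asynchrony immune rule of 4 variables is a bent function. -/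
/-- The nonlinearity of a Boolean function `f : 𝔽₂^k → 𝔽₂`: the minimum Hamming distance
of `f` from the affine functions `x ↦ a₀ ⊕ a₁x₁ ⊕ … ⊕ a_k x_k`. -/
noncomputable def nonlinearity {k : ℕ} (f : (Fin k → ZMod 2) → ZMod 2) : ℕ :=
  sInf { d : ℕ | ∃ (a0 : ZMod 2) (a : Fin k → ZMod 2),
    d = (Finset.univ.filter
          (fun x : Fin k → ZMod 2 => f x ≠ a0 + ∑ i, a i * x i)).card }

namespace NoBentAI

def chi (b : ZMod 2) : ℤ := if b = 0 then 1 else -1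

lemma chi_add : ∀ b c : ZMod 2, chi (b + c) = chi b * chi c := by decide
lemma chi_add_one : ∀ b : ZMod 2, chi (b + 1) = - chi b := by decide
lemma chi_eq_ite : ∀ b c : ZMod 2, chi (b + c) = if b = c then 1 else -1 := by decide
lemma chi_zero : chi 0 = 1 := rfl
lemma zmod2_add_self : ∀ b : ZMod 2, b + b = 0 := by decide
lemma zmod2_ne_zero : ∀ b : ZMod 2, b ≠ 0 → b = 1 := by decide
lemma zmod2_add_eq_zero : ∀ b c : ZMod 2, b + c = 0 ↔ c = b := by decide

lemma orth (z : Fin 4 → ZMod 2) :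
    ∑ a : Fin 4 → ZMod 2, chi (∑ i, a i * z i) = if z = 0 then 16 else 0 := by
  by_cases hz : z = 0
  · subst hz
    simp [chi, Finset.card_univ]
  · rw [if_neg hz]
    obtain ⟨i0, hi0⟩ := Function.ne_iff.mp hz
    have hz1 : z i0 = 1 := zmod2_ne_zero _ (by simpa using hi0)
    set d : Fin 4 → ZMod 2 := fun i => if i = i0 then 1 else 0 with hd
    have hsum : ∀ a : Fin 4 → ZMod 2, ∑ i, (a + d) i * z i = (∑ i, a i * z i) + 1 := by
      intro a
      have h1 : ∀ i, (a + d) i * z i = a i * z i + (if i = i0 then z i else 0) := by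
        intro i
        simp only [Pi.add_apply, hd, add_mul, ite_mul, one_mul, zero_mul]
      rw [Finset.sum_congr rfl (fun i _ => h1 i), Finset.sum_add_distrib]
      congr 1
      rw [Finset.sum_ite_eq' Finset.univ i0 z]
      simp [hz1]
    have key : (∑ a : Fin 4 → ZMod 2, chi (∑ i, a i * z i))
        = - ∑ a : Fin 4 → ZMod 2, chi (∑ i, a i * z i) := by
      conv_lhs => rw [← Equiv.sum_comp (Equiv.addRight d) (fun a => chi (∑ i, a i * z i))]
      have : ∀ a : Fin 4 → ZMod 2,
          chi (∑ i, ((Equiv.addRight d) a) i * z i) = - chi (∑ i, a i * z i) := by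
        intro a
        have ha : ((Equiv.addRight d) a) = a + d := rfl
        rw [ha, hsum, chi_add_one]
      rw [Finset.sum_congr rfl (fun a _ => this a), Finset.sum_neg_distrib]
    linarith

def Wt (f : (Fin 4 → ZMod 2) → ZMod 2) (a : Fin 4 → ZMod 2) : ℤ :=
  ∑ x : Fin 4 → ZMod 2, chi (f x + ∑ i, a i * x i)

lemma parseval (f : (Fin 4 → ZMod 2) → ZMod 2) :
    ∑ a : Fin 4 → ZMod 2, (Wt f a) ^ 2 = 256 := by
  have expand : ∀ a, (Wt f a) ^ 2 =
      ∑ x : Fin 4 → ZMod 2, ∑ y : Fin 4 → ZMod 2,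
        chi (f x + f y) * chi (∑ i, a i * (x i + y i)) := by
    intro a
    rw [sq, Wt, Finset.sum_mul_sum]
    refine Finset.sum_congr rfl fun x _ => Finset.sum_congr rfl fun y _ => ?_
    have h1 : (f x + ∑ i, a i * x i) + (f y + ∑ i, a i * y i)
        = (f x + f y) + ∑ i, a i * (x i + y i) := by
      have h2 : ∑ i, a i * (x i + y i) = (∑ i, a i * x i) + ∑ i, a i * y i := by
        rw [← Finset.sum_add_distrib]
        exact Finset.sum_congr rfl fun i _ => by ring
      rw [h2]; ring
    rw [← chi_add, h1, chi_add]
  rw [Finset.sum_congr rfl (fun a _ => expand a)]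
  rw [Finset.sum_comm]
  have swap2 : ∀ x : Fin 4 → ZMod 2,
      (∑ a : Fin 4 → ZMod 2, ∑ y : Fin 4 → ZMod 2,
        chi (f x + f y) * chi (∑ i, a i * (x i + y i)))
      = ∑ y : Fin 4 → ZMod 2, ∑ a : Fin 4 → ZMod 2,
        chi (f x + f y) * chi (∑ i, a i * (x i + y i)) := fun x => Finset.sum_comm
  rw [Finset.sum_congr rfl (fun x _ => swap2 x)]
  have inner : ∀ x y : Fin 4 → ZMod 2,
      (∑ a : Fin 4 → ZMod 2, chi (f x + f y) * chi (∑ i, a i * (x i + y i)))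
      = if y = x then 16 else 0 := by
    intro x y
    rw [← Finset.mul_sum]
    have horth : ∑ a : Fin 4 → ZMod 2, chi (∑ i, a i * (x i + y i))
        = if (x + y : Fin 4 → ZMod 2) = 0 then 16 else 0 := orth (x + y)
    rw [horth]
    by_cases h : y = x
    · subst h
      rw [if_pos (by funext i; exact zmod2_add_self _), if_pos rfl, zmod2_add_self, chi_zero]
      ring
    · rw [if_neg, if_neg h, mul_zero]
      intro hc
      exact h (funext fun i => (zmod2_add_eq_zero _ _).mp (congrFun hc i))
  rw [Finset.sum_congr rfl (fun x _ => Finset.sum_congr rfl (fun y _ => inner x y))]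
  simp [Finset.sum_ite_eq, Finset.card_univ]

lemma Wt_eq (f : (Fin 4 → ZMod 2) → ZMod 2) (a : Fin 4 → ZMod 2) :
    Wt f a = 16 - 2 * ((Finset.univ.filter
      (fun x : Fin 4 → ZMod 2 => f x ≠ 0 + ∑ i, a i * x i)).card : ℤ) := by
  have h1 : ∀ x : Fin 4 → ZMod 2, chi (f x + ∑ i, a i * x i)
      = 1 - 2 * (if f x ≠ 0 + ∑ i, a i * x i then (1:ℤ) else 0) := by
    intro x
    rw [chi_eq_ite, zero_add]
    by_cases h : f x = ∑ i, a i * x i <;> simp [h]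
  rw [Wt, Finset.sum_congr rfl (fun x _ => h1 x), Finset.sum_sub_distrib,
    Finset.sum_const, ← Finset.mul_sum, Finset.sum_boole]
  simp [Finset.card_univ]

def proj (x : Fin 11 → ZMod 2) : Fin 4 → ZMod 2 := fun j => x ⟨j.val, by omega⟩

lemma fiber_card (v : Fin 4 → ZMod 2) :
    (Finset.univ.filter fun x : Fin 11 → ZMod 2 => proj x = v).card = 128 := by
  rw [← Fintype.card_subtype]
  have E : {x : Fin 11 → ZMod 2 // proj x = v} ≃ (Fin 7 → ZMod 2) :=
    { toFun := fun x i => x.1 ⟨i.val + 4, by omega⟩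
      invFun := fun w => ⟨fun i => if h : i.val < 4 then v ⟨i.val, h⟩
          else w ⟨i.val - 4, by omega⟩, by
        funext j
        show (if h : (j:ℕ) < 4 then v ⟨j.val, h⟩ else _) = v j
        rw [dif_pos j.isLt]⟩
      left_inv := fun x => by
        apply Subtype.ext
        funext i
        show (if h : (i:ℕ) < 4 then v ⟨i.val, h⟩ else x.1 ⟨i.val - 4 + 4, _⟩) = x.1 i
        by_cases h : (i:ℕ) < 4
        · rw [dif_pos h]
          have h2 := congrFun x.2 ⟨i.val, h⟩
          rw [← h2]
          exact congrArg x.1 (Fin.ext rfl)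
        · rw [dif_neg h]
          exact congrArg x.1 (Fin.ext (by simp; omega))
      right_inv := fun w => by
        funext i
        show (if h : (i:ℕ) + 4 < 4 then v ⟨(i:ℕ) + 4, h⟩ else w ⟨(i:ℕ) + 4 - 4, _⟩) = w i
        rw [dif_neg (by omega)]
        exact congrArg w (Fin.ext (by simp)) }
  rw [Fintype.card_congr E]
  simp

lemma count_eight (f : (Fin 4 → ZMod 2) → ZMod 2)
    (hI : BalancedCA 1 2 (asyncCA 1 8 2 f {1})) :
    (Finset.univ.filter fun v : Fin 4 → ZMod 2 => f v = v 2).card = 8 := by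
  set G := asyncCA 1 8 2 f {1} with hG
  have hG0 : ∀ x : Fin 11 → ZMod 2, G x 0 = f (proj x) := by
    intro x
    show (if (0:Fin 8) ∈ ({1} : Finset (Fin 8)) then _ else f _) = _
    rw [if_neg (by decide)]
    congr 1
    funext j
    show x ⟨(0:Fin 8).val + j.val, _⟩ = x ⟨j.val, _⟩
    exact congrArg x (Fin.ext (by simp))
  have hG1 : ∀ x : Fin 11 → ZMod 2, G x 1 = proj x 2 := by
    intro x
    show (if (1:Fin 8) ∈ ({1} : Finset (Fin 8)) then x ⟨(1:Fin 8).val + 1, _⟩ else _) = _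
    rw [if_pos (by decide)]
    show x ⟨2, _⟩ = x ⟨2, _⟩
    rfl
  set s : Finset (Fin 11 → ZMod 2) :=
    Finset.univ.filter (fun x => f (proj x) = proj x 2) with hs
  set t : Finset (Fin 8 → ZMod 2) :=
    Finset.univ.filter (fun y => y 0 = y 1) with ht
  have htcard : t.card = 128 := by
    rw [ht]
    set_option maxRecDepth 10000 in decide
  have hmem : ∀ x ∈ s, G x ∈ t := by
    intro x hx
    rw [ht, Finset.mem_filter]
    rw [hs, Finset.mem_filter] at hx
    exact ⟨Finset.mem_univ _, by rw [hG0, hG1]; exact hx.2⟩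
  have hcard1 : s.card = ∑ y ∈ t, (s.filter fun x => G x = y).card :=
    Finset.card_eq_sum_card_fiberwise hmem
  have fib : ∀ y ∈ t, (s.filter fun x => G x = y).card = 8 := by
    intro y hy
    rw [ht, Finset.mem_filter] at hy
    have heq : s.filter (fun x => G x = y) = Finset.univ.filter (fun x => G x = y) := by
      ext x
      simp only [hs, Finset.mem_filter, Finset.mem_univ, true_and]
      constructor
      · exact fun h => h.2
      · intro h
        refine ⟨?_, h⟩
        rw [← hG0, ← hG1, h]
        exact hy.2
    rw [heq]
    exact hI y
  have hscard : s.card = 1024 := by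
    calc s.card = ∑ y ∈ t, (s.filter fun x => G x = y).card := hcard1
      _ = ∑ _y ∈ t, 8 := Finset.sum_congr rfl fib
      _ = t.card * 8 := by rw [Finset.sum_const, smul_eq_mul]
      _ = 1024 := by rw [htcard]
  have hmem2 : ∀ x ∈ s, proj x ∈ Finset.univ.filter (fun v : Fin 4 → ZMod 2 => f v = v 2) := by
    intro x hx
    rw [hs, Finset.mem_filter] at hx
    exact Finset.mem_filter.mpr ⟨Finset.mem_univ _, hx.2⟩
  have hcard2 : s.card = ∑ v ∈ Finset.univ.filter (fun v : Fin 4 → ZMod 2 => f v = v 2),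
      (s.filter fun x => proj x = v).card := Finset.card_eq_sum_card_fiberwise hmem2
  have fib2 : ∀ v ∈ Finset.univ.filter (fun v : Fin 4 → ZMod 2 => f v = v 2),
      (s.filter fun x => proj x = v).card = 128 := by
    intro v hv
    rw [Finset.mem_filter] at hv
    have heq : s.filter (fun x => proj x = v) = Finset.univ.filter (fun x => proj x = v) := by
      ext x
      simp only [hs, Finset.mem_filter, Finset.mem_univ, true_and]
      constructor
      · exact fun h => h.2
      · intro h
        exact ⟨by rw [h]; exact hv.2, h⟩
    rw [heq]
    exact fiber_card v
  have h3 : s.card = (Finset.univ.filter (fun v : Fin 4 → ZMod 2 => f v = v 2)).card * 128 := by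
    calc s.card = ∑ v ∈ Finset.univ.filter (fun v : Fin 4 → ZMod 2 => f v = v 2),
          (s.filter fun x => proj x = v).card := hcard2
      _ = ∑ _v ∈ Finset.univ.filter (fun v : Fin 4 → ZMod 2 => f v = v 2), 128 :=
          Finset.sum_congr rfl fib2
      _ = (Finset.univ.filter (fun v : Fin 4 → ZMod 2 => f v = v 2)).card * 128 := by
          rw [Finset.sum_const, smul_eq_mul]
  rw [hscard] at h3
  have h4 : (Finset.univ.filter (fun v : Fin 4 → ZMod 2 => f v = v 2)).card * 128 = 8 * 128 :=
    by rw [← h3]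
  exact Nat.eq_of_mul_eq_mul_right (by norm_num) h4

end NoBentAI


/-- no `(3,11)`-asynchrony immune local rule of 4 variables (memory 1,
anticipation 2, 8 output cells) has nonlinearity `6 = 2³ − 2¹`, i.e. none is bent. -/
theorem no_bent_ai_4var :
    ¬ ∃ f : (Fin (1 + 2 + 1) → ZMod 2) → ZMod 2,
        AsynchronyImmune 1 8 2 3 f ∧ nonlinearity f = 6 := by
  rintro ⟨f, ⟨-, hasync⟩, hnl⟩
  have hI : BalancedCA 1 2 (asyncCA 1 8 2 f {1}) := hasync {1} (by simp)
  have h8 := NoBentAI.count_eight f hI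
  set e2 : Fin 4 → ZMod 2 := fun i => if i = 2 then 1 else 0 with he2
  have hse : ∀ x : Fin 4 → ZMod 2, (0 : ZMod 2) + ∑ i, e2 i * x i = x 2 := by
    intro x
    rw [zero_add]
    have h1 : ∀ i, e2 i * x i = if i = 2 then x i else 0 := by
      intro i
      simp only [he2, ite_mul, one_mul, zero_mul]
    rw [Finset.sum_congr rfl fun i _ => h1 i, Finset.sum_ite_eq' Finset.univ (2 : Fin 4) x]
    simp
  have hdmem : ∀ (a0 : ZMod 2) (a : Fin 4 → ZMod 2),
      6 ≤ (Finset.univ.filter (fun x : Fin 4 → ZMod 2 => f x ≠ a0 + ∑ i, a i * x i)).card := by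
    intro a0 a
    have h : nonlinearity f ≤
        (Finset.univ.filter (fun x : Fin 4 → ZMod 2 => f x ≠ a0 + ∑ i, a i * x i)).card :=
      Nat.sInf_le ⟨a0, a, rfl⟩
    rwa [hnl] at h
  have hWb : ∀ a : Fin 4 → ZMod 2, (NoBentAI.Wt f a) ^ 2 ≤ 16 := by
    intro a
    have h6 := hdmem 0 a
    have h6' := hdmem 1 a
    have hco : (Finset.univ.filter (fun x : Fin 4 → ZMod 2 => f x ≠ 1 + ∑ i, a i * x i))
        = Finset.univ.filter (fun x : Fin 4 → ZMod 2 => ¬ (f x ≠ 0 + ∑ i, a i * x i)) := by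
      ext x
      simp only [Finset.mem_filter, Finset.mem_univ, true_and]
      have hiff : ∀ b c : ZMod 2, (b ≠ 1 + c) ↔ ¬ (b ≠ 0 + c) := by decide
      exact hiff (f x) _
    rw [hco] at h6'
    have hcomp := Finset.card_filter_add_card_filter_not
      (s := (Finset.univ : Finset (Fin 4 → ZMod 2)))
      (p := fun x : Fin 4 → ZMod 2 => f x ≠ 0 + ∑ i, a i * x i)
    have huniv : (Finset.univ : Finset (Fin 4 → ZMod 2)).card = 16 := by simp
    rw [huniv] at hcomp
    have h10 : (Finset.univ.filter
        (fun x : Fin 4 → ZMod 2 => f x ≠ 0 + ∑ i, a i * x i)).card ≤ 10 := by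
      have hle : (Finset.univ.filter
          (fun x : Fin 4 → ZMod 2 => f x ≠ 0 + ∑ i, a i * x i)).card + 6 ≤ 10 + 6 := by
        calc (Finset.univ.filter
            (fun x : Fin 4 → ZMod 2 => f x ≠ 0 + ∑ i, a i * x i)).card + 6
            ≤ (Finset.univ.filter
              (fun x : Fin 4 → ZMod 2 => f x ≠ 0 + ∑ i, a i * x i)).card
              + (Finset.univ.filter
                (fun x : Fin 4 → ZMod 2 => ¬ (f x ≠ 0 + ∑ i, a i * x i))).card :=
              Nat.add_le_add_left h6' _
          _ = 16 := hcomp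
      exact Nat.le_of_add_le_add_right hle
    rw [NoBentAI.Wt_eq]
    have hd6 : (6 : ℤ) ≤ ((Finset.univ.filter
        (fun x : Fin 4 → ZMod 2 => f x ≠ 0 + ∑ i, a i * x i)).card : ℤ) := by
      exact_mod_cast h6
    have hd10 : ((Finset.univ.filter
        (fun x : Fin 4 → ZMod 2 => f x ≠ 0 + ∑ i, a i * x i)).card : ℤ) ≤ 10 := by
      exact_mod_cast h10
    nlinarith [hd6, hd10]
  have hWe2 : NoBentAI.Wt f e2 = 0 := by
    rw [NoBentAI.Wt_eq]
    have heq : (Finset.univ.filter (fun x : Fin 4 → ZMod 2 => f x ≠ 0 + ∑ i, e2 i * x i))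
        = Finset.univ.filter (fun x : Fin 4 → ZMod 2 => ¬ (f x = x 2)) := by
      ext x
      simp only [Finset.mem_filter, Finset.mem_univ, true_and, hse x]
    rw [heq]
    have hcomp := Finset.card_filter_add_card_filter_not
      (s := (Finset.univ : Finset (Fin 4 → ZMod 2)))
      (p := fun x : Fin 4 → ZMod 2 => f x = x 2)
    have huniv : (Finset.univ : Finset (Fin 4 → ZMod 2)).card = 16 := by simp
    rw [huniv, h8] at hcomp
    have hc8 : (Finset.univ.filter (fun x : Fin 4 → ZMod 2 => ¬ (f x = x 2))).card = 8 :=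
      Nat.add_left_cancel hcomp
    rw [hc8]
    norm_num
  have hsum := NoBentAI.parseval f
  have hle : ∑ a : Fin 4 → ZMod 2, (NoBentAI.Wt f a) ^ 2
      ≤ ∑ a : Fin 4 → ZMod 2, (if a = e2 then (0:ℤ) else 16) := by
    apply Finset.sum_le_sum
    intro a _
    by_cases h : a = e2
    · rw [if_pos h, h, hWe2]
      norm_num
    · rw [if_neg h]
      exact hWb a
  have hrhs : ∑ a : Fin 4 → ZMod 2, (if a = e2 then (0:ℤ) else 16) = 240 := by
    have h1 : ∀ a : Fin 4 → ZMod 2,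
        (if a = e2 then (0:ℤ) else 16) = 16 - (if a = e2 then (16:ℤ) else 0) := by
      intro a
      split <;> ring
    rw [Finset.sum_congr rfl fun a _ => h1 a, Finset.sum_sub_distrib, Finset.sum_const,
      Finset.sum_ite_eq' Finset.univ e2 (fun _ => (16:ℤ))]
    simp [Finset.card_univ]
  rw [hsum, hrhs] at hle
  norm_num at hle
end
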